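/- A sequence (ψ_k) is a Bessel sequence for H if and only if the domain of its Gram operator G equals all of ℓ², in which case G is automatically bounded. -/

import Mathlib

open Filter Topology
open scoped ComplexInnerProductSpace

namespace Stmt16Aux

variable {H : Type*} [NormedAddCommGroup H] [InnerProductSpace ℂ H] [CompleteSpace H]

local notation "K" => lp (fun _ : ℕ => ℂ) 2

lemma rpow_two_eq (x : ℝ) : x ^ (2 : ENNReal).toReal = x ^ 2 := by
  rw [show ((2 : ENNReal).toReal) = ((2 : ℕ) : ℝ) by norm_num, Real.rpow_natCast]

lemma memℓp_two_of_sq {f : ℕ → ℂ} (h : Summable fun i => ‖f i‖ ^ 2) : Memℓp f 2 := by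
  apply memℓp_gen
  simpa only [rpow_two_eq] using h

lemma summable_sq (f : K) : Summable fun i => ‖(f : ℕ → ℂ) i‖ ^ 2 := by
  have h := (memℓp_gen_iff (by norm_num : (0:ℝ) < (2 : ENNReal).toReal)).1 (lp.memℓp f)
  simpa only [rpow_two_eq] using h

lemma tendsto_coord {u : ℕ → K} {x : K} (h : Tendsto u atTop (𝓝 x)) (k : ℕ) :
    Tendsto (fun n => (u n : ℕ → ℂ) k) atTop (𝓝 ((x : ℕ → ℂ) k)) := by
  rw [tendsto_iff_norm_sub_tendsto_zero] at h ⊢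
  refine squeeze_zero (fun n => norm_nonneg _) (fun n => ?_) h
  have : (u n : ℕ → ℂ) k - (x : ℕ → ℂ) k = ((u n - x : K) : ℕ → ℂ) k := by
    rw [lp.coeFn_sub]; rfl
  rw [this]
  exact lp.norm_apply_le_norm (by norm_num) _ k

variable (ψ : ℕ → H)

/-- The `k`-th "row" of the Gram matrix, as an element of `ℓ²`. -/
noncomputable def R (hcol : ∀ l, Memℓp (fun k => ⟪ψ k, ψ l⟫) 2) (k : ℕ) : K :=
  ⟨fun l => ⟪ψ l, ψ k⟫, hcol k⟩

@[simp] lemma R_apply (hcol : ∀ l, Memℓp (fun k => ⟪ψ k, ψ l⟫) 2) (k l : ℕ) :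
    (R ψ hcol k : ℕ → ℂ) l = ⟪ψ l, ψ k⟫ := rfl

lemma hasSum_R (hcol : ∀ l, Memℓp (fun k => ⟪ψ k, ψ l⟫) 2) (k : ℕ) (c : K) :
    HasSum (fun l => ⟪ψ k, ψ l⟫ * (c : ℕ → ℂ) l) ⟪R ψ hcol k, c⟫ := by
  have he : (fun l => (⟪(R ψ hcol k : ℕ → ℂ) l, (c : ℕ → ℂ) l⟫ : ℂ))
      = fun l => ⟪ψ k, ψ l⟫ * (c : ℕ → ℂ) l := by
    funext l
    rw [RCLike.inner_apply', R_apply, inner_conj_symm]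
  have h := lp.hasSum_inner (𝕜 := ℂ) (R ψ hcol k) c
  rwa [he] at h

/-- The Gram operator as a linear map, given that its domain is all of `ℓ²`. -/
noncomputable def Gmap (hcol : ∀ l, Memℓp (fun k => ⟪ψ k, ψ l⟫) 2)
    (hmem : ∀ c : K, Memℓp (fun k => (⟪R ψ hcol k, c⟫ : ℂ)) 2) : K →ₗ[ℂ] K where
  toFun c := ⟨fun k => ⟪R ψ hcol k, c⟫, hmem c⟩
  map_add' c d := by
    ext k
    simp only [lp.coeFn_add, Pi.add_apply]
    exact inner_add_right _ _ _
  map_smul' r c := by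
    ext k
    simp only [lp.coeFn_smul, Pi.smul_apply, RingHom.id_apply, smul_eq_mul]
    exact inner_smul_right _ _ _

theorem backward
    (hdom : ∀ c : K, ∃ g : K, ∀ k : ℕ,
      Tendsto (fun n => ∑ l ∈ Finset.range n, ⟪ψ k, ψ l⟫ * (c : ℕ → ℂ) l)
        atTop (𝓝 ((g : ℕ → ℂ) k))) :
    ∃ T : K →L[ℂ] K, ∀ (c : K) (k : ℕ),
      HasSum (fun l => ⟪ψ k, ψ l⟫ * (c : ℕ → ℂ) l) ((T c : ℕ → ℂ) k) := by
  classical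
  -- each column of the Gram matrix is in ℓ²
  have hcol : ∀ l, Memℓp (fun k => ⟪ψ k, ψ l⟫) 2 := by
    intro l
    obtain ⟨g, hg⟩ := hdom (lp.single 2 l (1 : ℂ))
    have hco : ∀ k, (g : ℕ → ℂ) k = ⟪ψ k, ψ l⟫ := by
      intro k
      refine tendsto_nhds_unique (hg k) ?_
      have hev : ∀ᶠ n in atTop,
          (⟪ψ k, ψ l⟫ : ℂ) = ∑ j ∈ Finset.range n, ⟪ψ k, ψ j⟫ * (lp.single 2 l (1:ℂ) : ℕ → ℂ) j := by
        filter_upwards [eventually_ge_atTop (l + 1)] with n hn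
        have hterm : ∀ j : ℕ, ⟪ψ k, ψ j⟫ * (lp.single 2 l (1:ℂ) : ℕ → ℂ) j
            = if j = l then ⟪ψ k, ψ l⟫ else 0 := by
          intro j
          rcases eq_or_ne j l with rfl | hj
          · rw [lp.single_apply_self, mul_one, if_pos rfl]
          · rw [lp.single_apply_ne _ _ _ hj, mul_zero, if_neg hj]
        rw [Finset.sum_congr rfl fun j _ => hterm j,
          Finset.sum_ite_eq' (Finset.range n) l (fun _ => (⟪ψ k, ψ l⟫ : ℂ)),
          if_pos (Finset.mem_range.2 (lt_of_lt_of_le (Nat.lt_succ_self l) hn))]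
      exact Tendsto.congr' hev tendsto_const_nhds
    have he : (fun k => (⟪ψ k, ψ l⟫ : ℂ)) = (g : ℕ → ℂ) := funext fun k => (hco k).symm
    rw [he]
    exact lp.memℓp g
  -- the Gram operator is everywhere defined with values in ℓ²
  have hmem : ∀ c : K, Memℓp (fun k => (⟪R ψ hcol k, c⟫ : ℂ)) 2 := by
    intro c
    obtain ⟨g, hg⟩ := hdom c
    have hco : ∀ k, (g : ℕ → ℂ) k = ⟪R ψ hcol k, c⟫ := fun k =>
      tendsto_nhds_unique (hg k) ((hasSum_R ψ hcol k c).tendsto_sum_nat)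
    have he : (fun k => (⟪R ψ hcol k, c⟫ : ℂ)) = (g : ℕ → ℂ) := funext fun k => (hco k).symm
    rw [he]
    exact lp.memℓp g
  set G := Gmap ψ hcol hmem with hG
  have hGapp : ∀ (c : K) (k : ℕ), (G c : ℕ → ℂ) k = ⟪R ψ hcol k, c⟫ := fun c k => rfl
  have cont : Continuous G := by
    apply LinearMap.continuous_of_seq_closed_graph
    intro u x y hux huy
    ext k
    have h1 : Tendsto (fun n => (⟪R ψ hcol k, u n⟫ : ℂ)) atTop (𝓝 (⟪R ψ hcol k, x⟫ : ℂ)) :=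
      Filter.Tendsto.inner tendsto_const_nhds hux
    have h2 : Tendsto (fun n => ((G (u n)) : ℕ → ℂ) k) atTop (𝓝 ((y : ℕ → ℂ) k)) :=
      tendsto_coord huy k
    have h3 : Tendsto (fun n => (⟪R ψ hcol k, u n⟫ : ℂ)) atTop (𝓝 ((y : ℕ → ℂ) k)) := by
      refine h2.congr fun n => ?_
      exact hGapp (u n) k
    rw [hGapp x k]
    exact tendsto_nhds_unique h3 h1
  refine ⟨⟨G, cont⟩, fun c k => ?_⟩
  have : ((⟨G, cont⟩ : K →L[ℂ] K) c : ℕ → ℂ) k = ⟪R ψ hcol k, c⟫ := rfl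
  rw [this]
  exact hasSum_R ψ hcol k c

theorem bessel_sum_le (ψ : ℕ → H) (T : K →L[ℂ] K)
    (hT : ∀ (c : K) (k : ℕ), HasSum (fun l => ⟪ψ k, ψ l⟫ * (c : ℕ → ℂ) l) ((T c : ℕ → ℂ) k))
    (f : H) (F : Finset ℕ) :
    ∑ k ∈ F, ‖⟪ψ k, f⟫‖ ^ 2 ≤ ‖T‖ * ‖f‖ ^ 2 := by
  classical
  set cfun : ℕ → ℂ := fun l => if l ∈ F then ⟪ψ l, f⟫ else 0 with hcfun
  have hc0 : ∀ i ∉ F, cfun i = 0 := fun i hi => if_neg hi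
  have hcmem : Memℓp cfun 2 := by
    apply memℓp_gen
    apply summable_of_ne_finset_zero (s := F)
    intro i hi
    rw [hc0 i hi, norm_zero, Real.zero_rpow (by norm_num)]
  set c : K := ⟨cfun, hcmem⟩ with hc
  have hcapp : ∀ l, (c : ℕ → ℂ) l = cfun l := fun l => rfl
  set S : H := ∑ l ∈ F, ⟪ψ l, f⟫ • ψ l with hS
  set t : ℝ := ∑ k ∈ F, ‖⟪ψ k, f⟫‖ ^ 2 with hts
  have ht0 : 0 ≤ t := Finset.sum_nonneg fun k _ => sq_nonneg _
  -- (T c) k = ⟪ψ k, S⟫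
  have hGc : ∀ k, (T c : ℕ → ℂ) k = ⟪ψ k, S⟫ := by
    intro k
    refine (hT c k).unique ?_
    have he : (⟪ψ k, S⟫ : ℂ) = ∑ l ∈ F, ⟪ψ k, ψ l⟫ * (c : ℕ → ℂ) l := by
      rw [hS, inner_sum]
      refine Finset.sum_congr rfl fun l hl => ?_
      rw [inner_smul_right, hcapp, hcfun]
      simp only [if_pos hl]
      ring
    rw [he]
    apply hasSum_sum_of_ne_finset_zero
    intro l hl
    rw [hcapp, hc0 l hl, mul_zero]
  -- ⟪c, T c⟫ = ⟪S, S⟫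
  have hip : (⟪c, T c⟫ : ℂ) = ⟪S, S⟫ := by
    rw [lp.inner_eq_tsum]
    have h1 : ∀ i ∉ F, (⟪(c : ℕ → ℂ) i, (T c : ℕ → ℂ) i⟫ : ℂ) = 0 := by
      intro i hi
      rw [RCLike.inner_apply', hcapp, hc0 i hi, map_zero, zero_mul]
    rw [tsum_eq_sum h1, hS, sum_inner]
    refine Finset.sum_congr rfl fun k hk => ?_
    rw [RCLike.inner_apply', hcapp, hcfun, inner_smul_left]
    simp only [if_pos hk]
    rw [hGc k]
  -- t = re ⟪S, f⟫ ≤ ‖S‖ * ‖f‖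
  have htSf : (⟪S, f⟫ : ℂ) = (t : ℝ) := by
    rw [hS, sum_inner, hts]
    push_cast
    refine Finset.sum_congr rfl fun k _ => ?_
    rw [inner_smul_left, RCLike.conj_mul]
    norm_cast
  have ht1 : t ≤ ‖S‖ * ‖f‖ := by
    calc t = RCLike.re (⟪S, f⟫ : ℂ) := by rw [htSf]; simp
    _ ≤ ‖(⟪S, f⟫ : ℂ)‖ := RCLike.re_le_norm _
    _ ≤ ‖S‖ * ‖f‖ := norm_inner_le_norm _ _
  -- ‖c‖ ^ 2 = t
  have hnc : ‖c‖ ^ 2 = t := by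
    rw [← inner_self_eq_norm_sq (𝕜 := ℂ) c, lp.inner_eq_tsum]
    have h1 : ∀ i ∉ F, (⟪(c : ℕ → ℂ) i, (c : ℕ → ℂ) i⟫ : ℂ) = 0 := by
      intro i hi
      rw [RCLike.inner_apply', hcapp, hc0 i hi, map_zero, zero_mul]
    rw [tsum_eq_sum h1]
    have h2 : ∀ k ∈ F, (⟪(c : ℕ → ℂ) k, (c : ℕ → ℂ) k⟫ : ℂ) = ((‖⟪ψ k, f⟫‖ ^ 2 : ℝ) : ℂ) := by
      intro k hk
      rw [RCLike.inner_apply', hcapp, hcfun]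
      simp only [if_pos hk]
      rw [RCLike.conj_mul]
      norm_cast
    rw [Finset.sum_congr rfl h2, ← Complex.ofReal_sum]
    simp [hts]
    norm_cast
  -- ‖S‖ ^ 2 ≤ ‖T‖ * t
  have ht2 : ‖S‖ ^ 2 ≤ ‖T‖ * t := by
    calc ‖S‖ ^ 2 = RCLike.re (⟪S, S⟫ : ℂ) := (inner_self_eq_norm_sq (𝕜 := ℂ) S).symm
    _ = RCLike.re (⟪c, T c⟫ : ℂ) := by rw [hip]
    _ ≤ ‖(⟪c, T c⟫ : ℂ)‖ := RCLike.re_le_norm _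
    _ ≤ ‖c‖ * ‖T c‖ := norm_inner_le_norm _ _
    _ ≤ ‖c‖ * (‖T‖ * ‖c‖) := by
        refine mul_le_mul_of_nonneg_left (T.le_opNorm c) (norm_nonneg _)
    _ = ‖T‖ * ‖c‖ ^ 2 := by ring
    _ = ‖T‖ * t := by rw [hnc]
  -- conclude
  rcases eq_or_lt_of_le ht0 with h | h
  · rw [← h]
    positivity
  · have hsq : t * t ≤ (‖T‖ * ‖f‖ ^ 2) * t := by
      nlinarith [mul_le_mul ht1 ht1 ht0 (mul_nonneg (norm_nonneg S) (norm_nonneg f)),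
        mul_le_mul_of_nonneg_right ht2 (sq_nonneg ‖f‖)]
    exact le_of_mul_le_mul_right hsq h

theorem forward (ψ : ℕ → H) {B : ℝ} (hB : 0 < B)
    (hbes : ∀ f : H,
      (Summable fun k => ‖⟪ψ k, f⟫‖ ^ 2) ∧ ∑' k, ‖⟪ψ k, f⟫‖ ^ 2 ≤ B * ‖f‖ ^ 2)
    (c : K) :
    ∃ g : K, ∀ k : ℕ,
      Tendsto (fun n => ∑ l ∈ Finset.range n, ⟪ψ k, ψ l⟫ * (c : ℕ → ℂ) l)
        atTop (𝓝 ((g : ℕ → ℂ) k)) := by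
  classical
  have hc2 : Summable fun l => ‖(c : ℕ → ℂ) l‖ ^ 2 := summable_sq c
  -- key finite inequality
  have key : ∀ F : Finset ℕ, ‖∑ l ∈ F, (c : ℕ → ℂ) l • ψ l‖ ^ 2
      ≤ B * ∑ l ∈ F, ‖(c : ℕ → ℂ) l‖ ^ 2 := by
    intro F
    set S : H := ∑ l ∈ F, (c : ℕ → ℂ) l • ψ l with hSdef
    have h2 : ‖S‖ ^ 2 ≤ ∑ l ∈ F, ‖(c : ℕ → ℂ) l‖ * ‖(⟪ψ l, S⟫ : ℂ)‖ := by
      calc ‖S‖ ^ 2 = RCLike.re (⟪S, S⟫ : ℂ) := (inner_self_eq_norm_sq (𝕜 := ℂ) S).symm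
      _ ≤ ‖(⟪S, S⟫ : ℂ)‖ := RCLike.re_le_norm _
      _ = ‖∑ l ∈ F, (c : ℕ → ℂ) l * ⟪S, ψ l⟫‖ := by
          rw [show (⟪S, S⟫ : ℂ) = ∑ l ∈ F, (c : ℕ → ℂ) l * ⟪S, ψ l⟫ by
            conv_lhs => rw [hSdef]
            rw [inner_sum]
            exact Finset.sum_congr rfl fun l _ => inner_smul_right _ _ _]
      _ ≤ ∑ l ∈ F, ‖(c : ℕ → ℂ) l * ⟪S, ψ l⟫‖ := norm_sum_le _ _
      _ = ∑ l ∈ F, ‖(c : ℕ → ℂ) l‖ * ‖(⟪ψ l, S⟫ : ℂ)‖ := by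
          refine Finset.sum_congr rfl fun l _ => ?_
          rw [norm_mul, norm_inner_symm]
    have h3 : (∑ l ∈ F, ‖(c : ℕ → ℂ) l‖ * ‖(⟪ψ l, S⟫ : ℂ)‖) ^ 2
        ≤ (∑ l ∈ F, ‖(c : ℕ → ℂ) l‖ ^ 2) * ∑ l ∈ F, ‖(⟪ψ l, S⟫ : ℂ)‖ ^ 2 :=
      Finset.sum_mul_sq_le_sq_mul_sq F _ _
    have h4 : ∑ l ∈ F, ‖(⟪ψ l, S⟫ : ℂ)‖ ^ 2 ≤ B * ‖S‖ ^ 2 := by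
      refine le_trans (Summable.sum_le_tsum F (fun l _ => sq_nonneg _) (hbes S).1) (hbes S).2
    have hX : 0 ≤ ∑ l ∈ F, ‖(c : ℕ → ℂ) l‖ * ‖(⟪ψ l, S⟫ : ℂ)‖ :=
      Finset.sum_nonneg fun l _ => mul_nonneg (norm_nonneg _) (norm_nonneg _)
    have hT0 : 0 ≤ ∑ l ∈ F, ‖(c : ℕ → ℂ) l‖ ^ 2 := Finset.sum_nonneg fun l _ => sq_nonneg _
    rcases eq_or_lt_of_le (sq_nonneg ‖S‖) with h | h
    · rw [← h]; positivity
    · have hmul : ‖S‖ ^ 2 * ‖S‖ ^ 2 ≤ (B * ∑ l ∈ F, ‖(c : ℕ → ℂ) l‖ ^ 2) * ‖S‖ ^ 2 := by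
        nlinarith [mul_le_mul h2 h2 (sq_nonneg ‖S‖) hX,
          mul_le_mul_of_nonneg_left h4 hT0]
      exact le_of_mul_le_mul_right hmul h
  -- summability of the synthesis series
  have hsum : Summable fun l => (c : ℕ → ℂ) l • ψ l := by
    rw [summable_iff_vanishing]
    intro e he
    rcases Metric.mem_nhds_iff.1 he with ⟨ε, εpos, hε⟩
    obtain ⟨s, hs⟩ := summable_iff_vanishing.1 hc2 (Metric.ball 0 (ε ^ 2 / B))
      (Metric.ball_mem_nhds 0 (by positivity))
    refine ⟨s, fun t ht => ?_⟩
    apply hε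
    have h1 := hs t ht
    rw [Metric.mem_ball, dist_zero_right, Real.norm_eq_abs] at h1
    have h2 : ∑ l ∈ t, ‖(c : ℕ → ℂ) l‖ ^ 2 < ε ^ 2 / B :=
      lt_of_le_of_lt (le_abs_self _) h1
    have h3 : ‖∑ l ∈ t, (c : ℕ → ℂ) l • ψ l‖ ^ 2 < ε ^ 2 := by
      refine lt_of_le_of_lt (key t) ?_
      rw [← lt_div_iff₀' hB]
      exact h2
    rw [Metric.mem_ball, dist_zero_right]
    nlinarith [norm_nonneg (∑ l ∈ t, (c : ℕ → ℂ) l • ψ l)]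
  set S : H := ∑' l, (c : ℕ → ℂ) l • ψ l with hS
  have hhs : HasSum (fun l => (c : ℕ → ℂ) l • ψ l) S := hsum.hasSum
  refine ⟨⟨fun k => ⟪ψ k, S⟫, memℓp_two_of_sq (hbes S).1⟩, fun k => ?_⟩
  have h6 : Tendsto (fun n => ∑ l ∈ Finset.range n, (c : ℕ → ℂ) l • ψ l) atTop (𝓝 S) :=
    hhs.tendsto_sum_nat
  have h7 : Tendsto (fun n => (⟪ψ k, ∑ l ∈ Finset.range n, (c : ℕ → ℂ) l • ψ l⟫ : ℂ))
      atTop (𝓝 (⟪ψ k, S⟫ : ℂ)) := Filter.Tendsto.inner tendsto_const_nhds h6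
  refine h7.congr fun n => ?_
  rw [inner_sum]
  exact Finset.sum_congr rfl fun l _ => by rw [inner_smul_right]; ring


end Stmt16Aux

/-- A sequence `(ψ k)` is a Bessel sequence for `H` if and only if the domain of its Gram
operator `G` equals all of `ℓ²`; in that case `G` is automatically bounded. -/
theorem stmt16 {H : Type*} [NormedAddCommGroup H] [InnerProductSpace ℂ H] [CompleteSpace H]
    (ψ : ℕ → H) :
    ((∃ B : ℝ, 0 < B ∧ ∀ f : H,
        (Summable fun k => ‖⟪ψ k, f⟫‖ ^ 2) ∧ ∑' k, ‖⟪ψ k, f⟫‖ ^ 2 ≤ B * ‖f‖ ^ 2)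
      ↔ ∀ c : lp (fun _ : ℕ => ℂ) 2, ∃ g : lp (fun _ : ℕ => ℂ) 2,
          ∀ k : ℕ, Tendsto (fun n => ∑ l ∈ Finset.range n, ⟪ψ k, ψ l⟫ * (c : ℕ → ℂ) l)
            atTop (𝓝 ((g : ℕ → ℂ) k)))
    ∧ ((∀ c : lp (fun _ : ℕ => ℂ) 2, ∃ g : lp (fun _ : ℕ => ℂ) 2,
          ∀ k : ℕ, Tendsto (fun n => ∑ l ∈ Finset.range n, ⟪ψ k, ψ l⟫ * (c : ℕ → ℂ) l)
            atTop (𝓝 ((g : ℕ → ℂ) k))) →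
        ∃ M : ℝ, ∀ (c g : lp (fun _ : ℕ => ℂ) 2),
          (∀ k : ℕ, Tendsto (fun n => ∑ l ∈ Finset.range n, ⟪ψ k, ψ l⟫ * (c : ℕ → ℂ) l)
            atTop (𝓝 ((g : ℕ → ℂ) k))) → ‖g‖ ≤ M * ‖c‖) := by
  constructor
  · constructor
    · rintro ⟨B, hB, hbes⟩ c
      exact Stmt16Aux.forward ψ hB hbes c
    · intro hdom
      obtain ⟨T, hT⟩ := Stmt16Aux.backward ψ hdom
      refine ⟨max ‖T‖ 1, lt_of_lt_of_le one_pos (le_max_right _ _), fun f => ?_⟩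
      have key : ∀ F : Finset ℕ, ∑ k ∈ F, ‖⟪ψ k, f⟫‖ ^ 2 ≤ max ‖T‖ 1 * ‖f‖ ^ 2 := by
        intro F
        refine le_trans (Stmt16Aux.bessel_sum_le ψ T hT f F) ?_
        exact mul_le_mul_of_nonneg_right (le_max_left _ _) (sq_nonneg _)
      have hsum : Summable fun k => ‖⟪ψ k, f⟫‖ ^ 2 :=
        summable_of_sum_le (fun k => sq_nonneg _) key
      exact ⟨hsum, Summable.tsum_le_of_sum_le hsum key⟩
  · intro hdom
    obtain ⟨T, hT⟩ := Stmt16Aux.backward ψ hdom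
    refine ⟨‖T‖, fun c g htend => ?_⟩
    have hg : g = T c := by
      ext k
      exact tendsto_nhds_unique (htend k) ((hT c k).tendsto_sum_nat)
    rw [hg]
    exact T.le_opNorm c
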